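/- Let P be a disjunctive ASP program and M an answer set of P. Then every unfounded set X for P with respect to M itself satisfies M ∩ X = ∅. -/

import Mathlib

/-- A ground disjunctive rule: `head` is the (nonempty) set of head atoms,
`pos` the set of positive body atoms, and `neg` the set of atoms occurring
negated in the body. -/
structure GRule (Atom : Type) where
  head : Set Atom
  pos : Set Atom
  neg : Set Atom
  head_nonempty : head.Nonempty

/-- The fact `a.` (a rule with singleton head and empty body). -/
def GRule.fact {Atom : Type} (a : Atom) : GRule Atom :=
  ⟨{a}, ∅, ∅, Set.singleton_nonempty a⟩

/-- An interpretation `I` satisfies a ground rule `r`: some head atom is true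
in `I` whenever all positive body atoms are in `I` and no negated body atom is in `I`. -/
def satisfiesRule {Atom : Type} (I : Set Atom) (r : GRule Atom) : Prop :=
  r.pos ⊆ I → r.neg ∩ I = ∅ → (r.head ∩ I).Nonempty

/-- `I` is a model of the ground program `P`. -/
def isModel {Atom : Type} (I : Set Atom) (P : Set (GRule Atom)) : Prop :=
  ∀ r ∈ P, satisfiesRule I r

/-- The Gelfond–Lifschitz reduct `ground(P)^I`: delete rules whose negated body
atoms intersect `I`, and remove the negative literals from the remaining rules. -/
def reduct {Atom : Type} (P : Set (GRule Atom)) (I : Set Atom) : Set (GRule Atom) :=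
  { r' | ∃ r ∈ P, r.neg ∩ I = ∅ ∧ r' = ⟨r.head, r.pos, ∅, r.head_nonempty⟩ }

/-- `M` is an answer set of `P` iff `M` is a subset-minimal model of `ground(P)^M`. -/
def isAnswerSet {Atom : Type} (P : Set (GRule Atom)) (M : Set Atom) : Prop :=
  isModel M (reduct P M) ∧ ∀ N : Set Atom, N ⊆ M → isModel N (reduct P M) → N = M

/-- `X` is an unfounded set for `P` w.r.t. the interpretation `I`: for each rule
of `ground(P)` whose head meets `X`, either (1.a) the positive body is not
contained in `I`, or (1.b) some negated body atom is in `I`, or (2) the positive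
body meets `X`, or (3) some head atom is in `I \ X`. -/
def unfoundedSet {Atom : Type} (P : Set (GRule Atom)) (I X : Set Atom) : Prop :=
  ∀ r ∈ P, (X ∩ r.head).Nonempty →
    (¬ r.pos ⊆ I) ∨ (r.neg ∩ I).Nonempty ∨ (r.pos ∩ X).Nonempty ∨
      (r.head ∩ (I \ X)).Nonempty

/-- Every unfounded set `X` for `P` w.r.t. an answer set `M`
of `P` itself satisfies `M ∩ X = ∅`. -/
theorem answer_set_disjoint_from_unfounded {Atom : Type}
    (P : Set (GRule Atom)) (M : Set Atom) (hM : isAnswerSet P M)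
    (X : Set Atom) (hX : unfoundedSet P M X) :
    M ∩ X = ∅ := by
  obtain ⟨hmod, hmin⟩ := hM
  have hN : isModel (M \ X) (reduct P M) := by
    rintro r' ⟨r, hrP, hneg, rfl⟩ hpos hnegI
    simp only at hpos ⊢
    have hposM : r.pos ⊆ M := hpos.trans (Set.diff_subset)
    have hMhead : (r.head ∩ M).Nonempty := hmod ⟨r.head, r.pos, ∅, r.head_nonempty⟩ ⟨r, hrP, hneg, rfl⟩ hposM
      (by simp)
    by_contra hempty
    push_neg at hempty
    have hXhead : (X ∩ r.head).Nonempty := by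
      obtain ⟨a, haH, haM⟩ := hMhead
      refine ⟨a, ?_, haH⟩
      by_contra haX
      exact (Set.eq_empty_iff_forall_notMem.mp hempty a) ⟨haH, haM, haX⟩
    rcases hX r hrP hXhead with h | h | h | h
    · exact h hposM
    · rw [hneg] at h; exact h.ne_empty rfl
    · obtain ⟨a, haP, haX⟩ := h
      exact (hpos haP).2 haX
    · obtain ⟨a, haH, haN⟩ := h
      exact (Set.eq_empty_iff_forall_notMem.mp hempty a) ⟨haH, haN⟩
  have := hmin (M \ X) Set.diff_subset hN
  ext a
  simp only [Set.mem_inter_iff, Set.mem_empty_iff_false, iff_false]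
  rintro ⟨haM, haX⟩
  rw [← this] at haM
  exact haM.2 haX
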